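/- Let R = ℂ[x,x⁻¹,y,y⁻¹]. Let A, B, C ⊆ R be the ℂ-subspaces spanned by the monomials xⁱyʲ with, respectively: i ≥ 0 and j ≥ 0 (A); i ≥ 0 and j ∈ ℤ (B); i ∈ ℤ and j ≥ 0 (C). Then for every natural number m, {f ∈ C : xᵐy⁻¹·f·(A + yC) ⊆ B + C} = x⁻ᵐA + yC. (For m = 0 this is the self-duality of the lattice (A + wC)/wC for ⟨1_z⟩ on the chart U_{σ₃}; for m = n, n−1, 1 it computes the dual lattices in the ⟨1_z⟩- and ⟨z⟩-columns of d¹ on the charts U_{σ₂} and U_{σ₃}.) -/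

import Mathlib

noncomputable section

open scoped Pointwise

/-- The Laurent polynomial ring `ℂ[x,x⁻¹,y,y⁻¹]` as the monoid algebra of `ℤ × ℤ` over `ℂ`. -/
abbrev LaurentR : Type := AddMonoidAlgebra ℂ (ℤ × ℤ)

/-- The monomial `xⁱyʲ`. -/
def mono (i j : ℤ) : LaurentR := AddMonoidAlgebra.single (i, j) 1

/-- `x` -/
def xx : LaurentR := mono 1 0
/-- `x⁻¹` -/
def xxInv : LaurentR := mono (-1) 0
/-- `y` -/
def yy : LaurentR := mono 0 1
/-- `y⁻¹` -/
def yyInv : LaurentR := mono 0 (-1)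

/-- `A = ℂ[x,y]`, the ℂ-subspace spanned by monomials `xⁱyʲ` with `i ≥ 0`, `j ≥ 0`. -/
def Asub : Submodule ℂ LaurentR := Submodule.span ℂ {r | ∃ (i : ℕ) (j : ℕ), r = mono i j}
/-- `B = ℂ[x,y,y⁻¹]`, the ℂ-subspace spanned by monomials `xⁱyʲ` with `i ≥ 0`, `j ∈ ℤ`. -/
def Bsub : Submodule ℂ LaurentR := Submodule.span ℂ {r | ∃ (i : ℕ) (j : ℤ), r = mono i j}
/-- `C = ℂ[x,x⁻¹,y]`, the ℂ-subspace spanned by monomials `xⁱyʲ` with `i ∈ ℤ`, `j ≥ 0`. -/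
def Csub : Submodule ℂ LaurentR := Submodule.span ℂ {r | ∃ (i : ℤ) (j : ℕ), r = mono i j}
/-- `ℂ[y,y⁻¹]`, the ℂ-subspace spanned by the monomials `yʲ`, `j ∈ ℤ`. -/
def Dy : Submodule ℂ LaurentR := Submodule.span ℂ {r | ∃ (j : ℤ), r = mono 0 j}
/-- `ℂ[x,x⁻¹]`, the ℂ-subspace spanned by the monomials `xⁱ`, `i ∈ ℤ`. -/
def Dx : Submodule ℂ LaurentR := Submodule.span ℂ {r | ∃ (i : ℤ), r = mono i 0}

/-- `u·L = {u·f : f ∈ L}` as a `ℂ`-submodule of `LaurentR`. -/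
def dil (u : LaurentR) (L : Submodule ℂ LaurentR) : Submodule ℂ LaurentR :=
  L.map (LinearMap.mulLeft ℂ u)

/- ## Auxiliary lemmas -/

lemma span_mono_eq (S : Set (ℤ × ℤ)) :
    Submodule.span ℂ ((fun p : ℤ × ℤ => (AddMonoidAlgebra.single p 1 : LaurentR)) '' S)
      = AddMonoidAlgebra.supported ℂ ℂ S :=
  (AddMonoidAlgebra.supported_eq_span_single ℂ S).symm


lemma memS' {S : Set (ℤ × ℤ)} {f : LaurentR} :
    f ∈ AddMonoidAlgebra.supported ℂ ℂ S ↔ ∀ q ∉ S, f.coeff q = 0 :=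
  AddMonoidAlgebra.mem_supported'

lemma memSup {S : Set (ℤ × ℤ)} {f : LaurentR} :
    f ∈ AddMonoidAlgebra.supported ℂ ℂ S ↔ ↑f.coeff.support ⊆ S :=
  Iff.rfl

lemma supported_union' (S T : Set (ℤ × ℤ)) :
    (AddMonoidAlgebra.supported ℂ ℂ (S ∪ T) : Submodule ℂ LaurentR)
      = AddMonoidAlgebra.supported ℂ ℂ S ⊔ AddMonoidAlgebra.supported ℂ ℂ T := by
  rw [AddMonoidAlgebra.supported_eq_map, AddMonoidAlgebra.supported_eq_map,
    AddMonoidAlgebra.supported_eq_map, ← Submodule.map_sup, Finsupp.supported_union]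

lemma single_mem_supported' {S : Set (ℤ × ℤ)} {a : ℤ × ℤ} (h : a ∈ S) :
    (AddMonoidAlgebra.single a (1 : ℂ) : LaurentR) ∈ AddMonoidAlgebra.supported ℂ ℂ S :=
  memSup.mpr (fun q hq => by
    have := Finsupp.support_single_subset hq
    simp only [Finset.coe_singleton, Set.mem_singleton_iff, Finset.mem_coe,
      Finset.mem_singleton] at this
    exact this ▸ h)

lemma Asub_eq : Asub = AddMonoidAlgebra.supported ℂ ℂ {p : ℤ × ℤ | 0 ≤ p.1 ∧ 0 ≤ p.2} := by
  rw [Asub, ← span_mono_eq]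
  congr 1
  ext r
  simp only [Set.mem_setOf_eq, Set.mem_image]
  constructor
  · rintro ⟨i, j, rfl⟩
    exact ⟨((i : ℤ), (j : ℤ)), ⟨Int.natCast_nonneg i, Int.natCast_nonneg j⟩, rfl⟩
  · rintro ⟨⟨i, j⟩, ⟨hi, hj⟩, rfl⟩
    exact ⟨i.toNat, j.toNat, by
      simp only [mono, Int.toNat_of_nonneg hi, Int.toNat_of_nonneg hj]⟩

lemma Bsub_eq : Bsub = AddMonoidAlgebra.supported ℂ ℂ {p : ℤ × ℤ | 0 ≤ p.1} := by
  rw [Bsub, ← span_mono_eq]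
  congr 1
  ext r
  simp only [Set.mem_setOf_eq, Set.mem_image]
  constructor
  · rintro ⟨i, j, rfl⟩
    exact ⟨((i : ℤ), j), Int.natCast_nonneg i, rfl⟩
  · rintro ⟨⟨i, j⟩, hi, rfl⟩
    exact ⟨i.toNat, j, by simp only [mono, Int.toNat_of_nonneg hi]⟩

lemma Csub_eq : Csub = AddMonoidAlgebra.supported ℂ ℂ {p : ℤ × ℤ | 0 ≤ p.2} := by
  rw [Csub, ← span_mono_eq]
  congr 1
  ext r
  simp only [Set.mem_setOf_eq, Set.mem_image]
  constructor
  · rintro ⟨i, j, rfl⟩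
    exact ⟨(i, (j : ℤ)), Int.natCast_nonneg j, rfl⟩
  · rintro ⟨⟨i, j⟩, hj, rfl⟩
    exact ⟨i, j.toNat, by simp only [mono, Int.toNat_of_nonneg hj]⟩

lemma dil_single (a : ℤ × ℤ) (S : Set (ℤ × ℤ)) :
    dil (AddMonoidAlgebra.single a (1 : ℂ)) (AddMonoidAlgebra.supported ℂ ℂ S)
      = AddMonoidAlgebra.supported ℂ ℂ ((fun p => -a + p) ⁻¹' S) := by
  ext f
  simp only [dil, Submodule.mem_map, LinearMap.mulLeft_apply]
  constructor
  · rintro ⟨g, hg, rfl⟩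
    refine memS'.mpr fun p hp => ?_
    rw [AddMonoidAlgebra.coeff_single_mul_apply, one_mul]
    exact memS'.mp hg _ hp
  · intro hf
    refine ⟨AddMonoidAlgebra.single (-a) 1 * f, ?_, ?_⟩
    · refine memS'.mpr fun q hq => ?_
      rw [AddMonoidAlgebra.coeff_single_mul_apply, one_mul]
      apply memS'.mp hf
      simpa using hq
    · rw [← mul_assoc, AddMonoidAlgebra.single_mul_single, add_neg_cancel, one_mul,
        ← AddMonoidAlgebra.one_def, one_mul]

lemma dil_yy_Csub :
    dil yy Csub = AddMonoidAlgebra.supported ℂ ℂ {p : ℤ × ℤ | 1 ≤ p.2} := by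
  have hyy : yy = AddMonoidAlgebra.single ((0 : ℤ), (1 : ℤ)) (1 : ℂ) := rfl
  have hset : ((fun p => -((0 : ℤ), (1 : ℤ)) + p) ⁻¹' {p : ℤ × ℤ | 0 ≤ p.2})
      = {p : ℤ × ℤ | 1 ≤ p.2} := by
    ext ⟨i, j⟩
    simp only [Set.mem_preimage, Set.mem_setOf_eq, Prod.neg_mk, Prod.mk_add_mk]
    omega
  rw [hyy, Csub_eq, dil_single, hset]

/- ## The main theorem -/

theorem stmt_13 (m : ℕ) :
    {f : LaurentR | f ∈ Csub ∧
        ∀ g ∈ Asub ⊔ dil yy Csub, xx ^ m * yyInv * (f * g) ∈ Bsub ⊔ Csub}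
      = ((dil (xxInv ^ m) Asub ⊔ dil yy Csub : Submodule ℂ LaurentR) : Set LaurentR) := by
  classical
  -- basic monomial computations
  have hxm : (xx ^ m * yyInv : LaurentR) = AddMonoidAlgebra.single (((m : ℤ)), (-1 : ℤ)) 1 := by
    rw [xx, yyInv, mono, mono, AddMonoidAlgebra.single_pow, AddMonoidAlgebra.single_mul_single]
    have h1 : m • ((1 : ℤ), (0 : ℤ)) + ((0 : ℤ), (-1 : ℤ)) = (((m : ℤ)), (-1 : ℤ)) := by
      simp [Prod.ext_iff]
    rw [h1, mul_one, one_pow]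
  have hxinv : (xxInv ^ m : LaurentR) = AddMonoidAlgebra.single ((-(m : ℤ)), (0 : ℤ)) 1 := by
    rw [xxInv, mono, AddMonoidAlgebra.single_pow]
    have h1 : m • ((-1 : ℤ), (0 : ℤ)) = ((-(m : ℤ)), (0 : ℤ)) := by
      simp [Prod.ext_iff]
    rw [h1, one_pow]
  -- submodule computations
  have hRHS : (dil (xxInv ^ m) Asub ⊔ dil yy Csub : Submodule ℂ LaurentR)
      = AddMonoidAlgebra.supported ℂ ℂ {p : ℤ × ℤ | (-(m : ℤ) ≤ p.1 ∧ 0 ≤ p.2) ∨ 1 ≤ p.2} := by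
    have hset : (((fun p => -((-(m : ℤ)), (0 : ℤ)) + p) ⁻¹' {p : ℤ × ℤ | 0 ≤ p.1 ∧ 0 ≤ p.2})
          ∪ {p : ℤ × ℤ | 1 ≤ p.2})
        = {p : ℤ × ℤ | (-(m : ℤ) ≤ p.1 ∧ 0 ≤ p.2) ∨ 1 ≤ p.2} := by
      ext ⟨i, j⟩
      simp only [Set.mem_union, Set.mem_preimage, Set.mem_setOf_eq, Prod.neg_mk, neg_neg,
        neg_zero, Prod.mk_add_mk]
      omega
    rw [hxinv, Asub_eq, dil_single, dil_yy_Csub, ← supported_union', hset]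
  have hAyC : (Asub ⊔ dil yy Csub : Submodule ℂ LaurentR)
      = AddMonoidAlgebra.supported ℂ ℂ {p : ℤ × ℤ | (0 ≤ p.1 ∧ 0 ≤ p.2) ∨ 1 ≤ p.2} := by
    have hset : ({p : ℤ × ℤ | 0 ≤ p.1 ∧ 0 ≤ p.2} ∪ {p : ℤ × ℤ | 1 ≤ p.2})
        = {p : ℤ × ℤ | (0 ≤ p.1 ∧ 0 ≤ p.2) ∨ 1 ≤ p.2} := by
      ext ⟨i, j⟩
      simp [Set.mem_union]
    rw [Asub_eq, dil_yy_Csub, ← supported_union', hset]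
  have hBC : (Bsub ⊔ Csub : Submodule ℂ LaurentR)
      = AddMonoidAlgebra.supported ℂ ℂ {p : ℤ × ℤ | 0 ≤ p.1 ∨ 0 ≤ p.2} := by
    have hset : ({p : ℤ × ℤ | 0 ≤ p.1} ∪ {p : ℤ × ℤ | 0 ≤ p.2})
        = {p : ℤ × ℤ | 0 ≤ p.1 ∨ 0 ≤ p.2} := by
      ext ⟨i, j⟩
      simp [Set.mem_union]
    rw [Bsub_eq, Csub_eq, ← supported_union', hset]
  ext f
  simp only [Set.mem_setOf_eq, SetLike.mem_coe]
  rw [hRHS, hAyC, hBC, Csub_eq]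
  constructor
  · -- hard direction
    rintro ⟨hfC, hcond⟩
    replace hfC := memS'.mp hfC
    refine memS'.mpr fun p hp => ?_
    by_contra hfp
    have h2 : (0 : ℤ) ≤ p.2 := by
      by_contra h
      exact hfp (hfC p (by simpa using h))
    simp only [Set.mem_setOf_eq, not_or, not_and, not_le] at hp
    have h20 : p.2 = 0 := by omega
    have h1 : p.1 < -(m : ℤ) := by
      have := hp.1
      omega
    set b : ℤ × ℤ := (-p.1 - m - 1, 0) with hb
    have hbmem : b ∈ {p : ℤ × ℤ | (0 ≤ p.1 ∧ 0 ≤ p.2) ∨ 1 ≤ p.2} := by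
      left
      refine ⟨?_, le_refl 0⟩
      simp only [hb]
      omega
    have hgmem : (AddMonoidAlgebra.single b (1 : ℂ) : LaurentR)
        ∈ AddMonoidAlgebra.supported ℂ ℂ {p : ℤ × ℤ | (0 ≤ p.1 ∧ 0 ≤ p.2) ∨ 1 ≤ p.2} :=
      single_mem_supported' hbmem
    have hP := memS'.mp (hcond _ hgmem)
    have hq : ((-1 : ℤ), (-1 : ℤ)) ∉ {p : ℤ × ℤ | 0 ≤ p.1 ∨ 0 ≤ p.2} := by
      simp
    have hval := hP _ hq
    rw [hxm, AddMonoidAlgebra.coeff_single_mul_apply, one_mul,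
      AddMonoidAlgebra.coeff_mul_single_apply, mul_one] at hval
    have hpt : (-(((m : ℤ)), (-1 : ℤ)) + ((-1 : ℤ), (-1 : ℤ))) - b = p := by
      simp only [hb, Prod.neg_mk, Prod.mk_add_mk, Prod.mk_sub_mk, Prod.ext_iff]
      constructor <;> omega
    rw [← sub_eq_add_neg, hpt] at hval
    exact hfp hval
  · -- easy direction
    intro hf
    constructor
    · refine AddMonoidAlgebra.supported_mono ?_ hf
      rintro ⟨i, j⟩ h
      simp only [Set.mem_setOf_eq] at h ⊢
      rcases h with ⟨-, h⟩ | h <;> omega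
    · intro g hg
      replace hf := memSup.mp hf
      replace hg := memSup.mp hg
      refine memSup.mpr ?_
      rw [hxm]
      intro q hq
      simp only [Finset.mem_coe] at hq
      have hsub : ((AddMonoidAlgebra.single (((m : ℤ)), (-1 : ℤ)) (1 : ℂ) : LaurentR)
            * (f * g)).coeff.support
          ⊆ (AddMonoidAlgebra.single (((m : ℤ)), (-1 : ℤ)) (1 : ℂ) : LaurentR).coeff.support
            + (f.coeff.support + g.coeff.support) := by
        refine (AddMonoidAlgebra.support_coeff_mul_subset _ _).trans ?_
        exact Finset.add_subset_add_left (AddMonoidAlgebra.support_coeff_mul_subset _ _)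
      have hq' := hsub hq
      rw [Finset.mem_add] at hq'
      obtain ⟨c, hc, w, hw, hcw⟩ := hq'
      rw [Finset.mem_add] at hw
      obtain ⟨u, hu, v, hv, huv⟩ := hw
      have hc' : c = (((m : ℤ)), (-1 : ℤ)) := by
        have := Finsupp.support_single_subset hc
        simpa using this
      have hu' := hf hu
      have hv' := hg hv
      simp only [Set.mem_setOf_eq] at hu' hv' ⊢
      subst hc'
      subst huv
      subst hcw
      simp only [Prod.fst_add, Prod.snd_add]
      omega
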